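/- Let Ω ⊆ ℝ² be simply connected and φ a C² solution of the minimal surface equation on Ω. If ψ : Ω → ℝ satisfies ψ_x = −φ_y/√(1+|∇φ|²) and ψ_y = φ_x/√(1+|∇φ|²), then |∇ψ| < 1 on Ω and ψ solves the maximal surface equation div(∇ψ/√(1−|∇ψ|²)) = 0. -/

import Mathlib

noncomputable def px (f : ℝ × ℝ → ℝ) (z : ℝ × ℝ) : ℝ := fderiv ℝ f z (1, 0)

noncomputable def py (f : ℝ × ℝ → ℝ) (z : ℝ × ℝ) : ℝ := fderiv ℝ f z (0, 1)

/-- `W φ z = √(1 + |∇φ(z)|²)`. -/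
noncomputable def W (φ : ℝ × ℝ → ℝ) (z : ℝ × ℝ) : ℝ :=
  Real.sqrt (1 + (px φ z) ^ 2 + (py φ z) ^ 2)

/-- `Wm ψ z = √(1 − |∇ψ(z)|²)`. -/
noncomputable def Wm (ψ : ℝ × ℝ → ℝ) (z : ℝ × ℝ) : ℝ :=
  Real.sqrt (1 - (px ψ z) ^ 2 - (py ψ z) ^ 2)

/-- The minimal surface equation `div(∇φ/√(1+|∇φ|²)) = 0` on `Ω`. -/
def MinimalSurfaceEq (φ : ℝ × ℝ → ℝ) (Ω : Set (ℝ × ℝ)) : Prop :=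
  ∀ z ∈ Ω, px (fun z => px φ z / W φ z) z + py (fun z => py φ z / W φ z) z = 0

/-- The maximal surface equation `div(∇ψ/√(1−|∇ψ|²)) = 0` on `Ω`. -/
def MaximalSurfaceEq (ψ : ℝ × ℝ → ℝ) (Ω : Set (ℝ × ℝ)) : Prop :=
  ∀ z ∈ Ω, px (fun z => px ψ z / Wm ψ z) z + py (fun z => py ψ z / Wm ψ z) z = 0

/-- On `Ω`, `W φ z ≥ 1`. -/
lemma W_ge_one (φ : ℝ × ℝ → ℝ) (z : ℝ × ℝ) : 1 ≤ W φ z := by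
  have h : (0:ℝ) ≤ 1 + (px φ z) ^ 2 + (py φ z) ^ 2 := by positivity
  have := Real.sq_sqrt h
  have h0 := Real.sqrt_nonneg (1 + (px φ z) ^ 2 + (py φ z) ^ 2)
  rw [W]
  nlinarith [sq_nonneg (px φ z), sq_nonneg (py φ z)]

lemma W_sq (φ : ℝ × ℝ → ℝ) (z : ℝ × ℝ) :
    (W φ z) ^ 2 = 1 + (px φ z) ^ 2 + (py φ z) ^ 2 := by
  rw [W, Real.sq_sqrt]
  nlinarith [sq_nonneg (px φ z), sq_nonneg (py φ z)]

/-- the key pointwise identities -/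
lemma key (φ ψ : ℝ × ℝ → ℝ) (z : ℝ × ℝ)
    (h1 : px ψ z = -(py φ z) / W φ z) (h2 : py ψ z = px φ z / W φ z) :
    (px ψ z) ^ 2 + (py ψ z) ^ 2 < 1 ∧ Wm ψ z = 1 / W φ z ∧
      px ψ z / Wm ψ z = -(py φ z) ∧ py ψ z / Wm ψ z = px φ z := by
  set a := px φ z; set b := py φ z; set w := W φ z
  have hw1 : 1 ≤ w := W_ge_one φ z
  have hw0 : 0 < w := lt_of_lt_of_le one_pos hw1
  have hwsq : w ^ 2 = 1 + a ^ 2 + b ^ 2 := W_sq φ z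
  have hlt : (px ψ z) ^ 2 + (py ψ z) ^ 2 < 1 := by
    rw [h1, h2, div_pow, div_pow]
    rw [← add_div, div_lt_one (by positivity)]
    nlinarith
  have hWm : Wm ψ z = 1 / w := by
    rw [Wm, h1, h2]
    have : 1 - ((-b) / w) ^ 2 - (a / w) ^ 2 = (1 / w) ^ 2 := by
      field_simp
      nlinarith
    rw [this, Real.sqrt_sq (by positivity)]
  refine ⟨hlt, hWm, ?_, ?_⟩
  · rw [hWm, h1]; field_simp
  · rw [hWm, h2]; field_simp

theorem stmt_1 (Ω : Set (ℝ × ℝ)) (hΩ : IsOpen Ω) (hsc : SimplyConnectedSpace Ω)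
    (φ : ℝ × ℝ → ℝ) (hφ : ContDiffOn ℝ 2 φ Ω) (hmin : MinimalSurfaceEq φ Ω)
    (ψ : ℝ × ℝ → ℝ)
    (hdual : ∀ z ∈ Ω, px ψ z = -(py φ z) / W φ z ∧ py ψ z = px φ z / W φ z) :
    (∀ z ∈ Ω, Real.sqrt ((px ψ z) ^ 2 + (py ψ z) ^ 2) < 1) ∧ MaximalSurfaceEq ψ Ω := by
  constructor
  · intro z hz
    obtain ⟨hlt, -⟩ := key φ ψ z (hdual z hz).1 (hdual z hz).2
    calc Real.sqrt ((px ψ z) ^ 2 + (py ψ z) ^ 2) < Real.sqrt 1 :=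
          Real.sqrt_lt_sqrt (by positivity) hlt
      _ = 1 := Real.sqrt_one
  · intro z hz
    have hca : ContDiffAt ℝ 2 φ z := (hφ z hz).contDiffAt (hΩ.mem_nhds hz)
    have hdf : DifferentiableAt ℝ (fderiv ℝ φ) z :=
      (hca.fderiv_right (m := 1) le_rfl).differentiableAt one_ne_zero
    -- replace the quotients by ∓ partials via eventual equality on Ω
    have e1 : (fun y => px ψ y / Wm ψ y) =ᶠ[nhds z] (fun y => -(py φ y)) := by
      filter_upwards [hΩ.mem_nhds hz] with y hy
      exact (key φ ψ y (hdual y hy).1 (hdual y hy).2).2.2.1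
    have e2 : (fun y => py ψ y / Wm ψ y) =ᶠ[nhds z] (fun y => px φ y) := by
      filter_upwards [hΩ.mem_nhds hz] with y hy
      exact (key φ ψ y (hdual y hy).1 (hdual y hy).2).2.2.2
    have h1 : px (fun y => px ψ y / Wm ψ y) z = px (fun y => -(py φ y)) z :=
      DFunLike.congr_fun e1.fderiv_eq (1, 0)
    have h2 : py (fun y => py ψ y / Wm ψ y) z = py (fun y => px φ y) z :=
      DFunLike.congr_fun e2.fderiv_eq (0, 1)
    rw [h1, h2]
    -- mixed partials via the second derivative
    have heval : ∀ v w : ℝ × ℝ, fderiv ℝ (fun y => fderiv ℝ φ y v) z w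
        = fderiv ℝ (fderiv ℝ φ) z w v := by
      intro v w
      have : fderiv ℝ (fun y => (fderiv ℝ φ y) ((fun _ => v) y)) z
          = (fderiv ℝ φ z).comp (fderiv ℝ (fun _ : ℝ × ℝ => v) z)
            + (fderiv ℝ (fderiv ℝ φ) z).flip v :=
        fderiv_clm_apply hdf (differentiableAt_const v)
      simp only [fderiv_const, Pi.zero_apply] at this
      simp [this]
    have hsymm := hca.isSymmSndFDerivAt (by simp [minSmoothness_of_isRCLikeNormedField])
    have hpx : px (fun y => -(py φ y)) z = -(fderiv ℝ (fderiv ℝ φ) z (1, 0) (0, 1)) := by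
      unfold px py
      rw [show (fun y => -(fderiv ℝ φ y (0,1))) = (fun y => (-1 : ℝ) • (fderiv ℝ φ y (0,1)))
        by funext y; simp]
      rw [fderiv_fun_const_smul (by exact hdf.clm_apply (differentiableAt_const _))]
      simp [heval (0,1) (1,0)]
    have hpy : py (fun y => px φ y) z = fderiv ℝ (fderiv ℝ φ) z (0, 1) (1, 0) := by
      unfold px py
      rw [heval (1,0) (0,1)]
    rw [hpx, hpy, hsymm (1,0) (0,1)]
    ring
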